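/- Let n ≥ 1 and p = 2n+1 be an odd prime. Define 2n×2n integer matrices P and Q by: P_{i,j} = 1 if i+j = 2n+1 and P_{i,j} = 0 otherwise; Q_{i,1} = -1 for all 1 ≤ i ≤ 2n, Q_{i,j} = 1 if i ≥ 2 and i+j = 2n+2, and Q_{i,j} = 0 otherwise. Let C_n be the companion matrix of θ_n, and define 2n×2n integer block matrices X' = [[-E_n, E_n],[0, E_n]] and Y' = [[-E_n, 0],[C_n, E_n]] (E_n the n×n identity). Then there exists a matrix U ∈ GL(2n,ℤ) (i.e. an integer matrix with determinant ±1) such that U·P·U⁻¹ = X' and U·Q·U⁻¹ = Y'. -/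

import Mathlib

open Finset Matrix

/-- The coefficient `c_k^{(n)} = C(n+k,2k) + 2·C(n+k,2k+1)` of `θ_n`. -/
def thetaCoeff (n k : ℕ) : ℤ := ((n + k).choose (2 * k) : ℤ) + 2 * ((n + k).choose (2 * k + 1) : ℤ)

/-- The companion matrix `C_n` of `θ_n`: 1's on the subdiagonal, last column
`(-c_0^{(n)}, …, -c_{n-1}^{(n)})ᵀ`, and 0's elsewhere. -/
def companionTheta (n : ℕ) : Matrix (Fin n) (Fin n) ℤ :=
  Matrix.of fun i j =>
    if (j : ℕ) = n - 1 then - thetaCoeff n i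
    else if (i : ℕ) = (j : ℕ) + 1 then 1 else 0

/-- The 2n×2n matrix `P` (1-based: `P_{i,j} = 1` iff `i + j = 2n+1`). -/
def Pmat (n : ℕ) : Matrix (Fin (2 * n)) (Fin (2 * n)) ℤ :=
  Matrix.of fun i j => if (i : ℕ) + (j : ℕ) = 2 * n - 1 then 1 else 0

/-- The 2n×2n matrix `Q` (1-based: `Q_{i,1} = -1` for all `i`, `Q_{i,j} = 1` if
`i ≥ 2` and `i + j = 2n+2`, and `0` otherwise). -/
def Qmat (n : ℕ) : Matrix (Fin (2 * n)) (Fin (2 * n)) ℤ :=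
  Matrix.of fun i j =>
    if (j : ℕ) = 0 then -1
    else if 1 ≤ (i : ℕ) ∧ (i : ℕ) + (j : ℕ) = 2 * n then 1 else 0

/-- Identification of `Fin n ⊕ Fin n` with `Fin (2*n)`, used to assemble block matrices. -/
def sumEquiv (n : ℕ) : (Fin n ⊕ Fin n) ≃ Fin (2 * n) :=
  finSumFinEquiv.trans (finCongr (two_mul n).symm)

lemma theta_zero (i : ℕ) : thetaCoeff 0 i = if i = 0 then 1 else 0 := by
  rcases i with _ | i
  · simp [thetaCoeff]
  · simp only [thetaCoeff, Nat.zero_add]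
    rw [Nat.choose_eq_zero_of_lt (by omega), Nat.choose_eq_zero_of_lt (by omega)]
    simp

lemma theta_high {j i : ℕ} (h : j < i) : thetaCoeff j i = 0 := by
  simp only [thetaCoeff]
  rw [Nat.choose_eq_zero_of_lt (by omega), Nat.choose_eq_zero_of_lt (by omega)]
  simp

lemma theta_diag (j : ℕ) : thetaCoeff j j = 1 := by
  simp only [thetaCoeff, ← two_mul]
  rw [Nat.choose_self, Nat.choose_eq_zero_of_lt (by omega)]
  simp

lemma theta_c0 (j : ℕ) : thetaCoeff j 0 = 2 * j + 1 := by
  simp [thetaCoeff, Nat.choose_one_right]; ring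

/-- The Chebyshev-type recurrence `θ_{j+2} + θ_j = z·θ_{j+1} + 2·θ_{j+1}` at coefficient level. -/
lemma theta_rec (j i : ℕ) :
    thetaCoeff (j + 2) (i + 1) + thetaCoeff j (i + 1)
      = thetaCoeff (j + 1) i + 2 * thetaCoeff (j + 1) (i + 1) := by
  simp only [thetaCoeff]
  simp only [show j + 2 + (i + 1) = j + i + 3 by omega, show j + (i + 1) = j + i + 1 by omega,
    show j + 1 + i = j + i + 1 by omega, show j + 1 + (i + 1) = j + i + 2 by omega,
    show 2 * (i + 1) = 2 * i + 2 by omega, show 2 * i + 2 + 1 = 2 * i + 3 by omega]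
  have p1 : ((j + i + 3).choose (2 * i + 2) : ℤ)
      = (j + i + 2).choose (2 * i + 1) + (j + i + 2).choose (2 * i + 2) := by
    exact_mod_cast Nat.choose_succ_succ (j + i + 2) (2 * i + 1)
  have p2 : ((j + i + 3).choose (2 * i + 3) : ℤ)
      = (j + i + 2).choose (2 * i + 2) + (j + i + 2).choose (2 * i + 3) := by
    exact_mod_cast Nat.choose_succ_succ (j + i + 2) (2 * i + 2)
  have p3 : ((j + i + 2).choose (2 * i + 1) : ℤ)
      = (j + i + 1).choose (2 * i) + (j + i + 1).choose (2 * i + 1) := by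
    exact_mod_cast Nat.choose_succ_succ (j + i + 1) (2 * i)
  have p4 : ((j + i + 2).choose (2 * i + 2) : ℤ)
      = (j + i + 1).choose (2 * i + 1) + (j + i + 1).choose (2 * i + 2) := by
    exact_mod_cast Nat.choose_succ_succ (j + i + 1) (2 * i + 1)
  have p5 : ((j + i + 2).choose (2 * i + 3) : ℤ)
      = (j + i + 1).choose (2 * i + 2) + (j + i + 1).choose (2 * i + 3) := by
    exact_mod_cast Nat.choose_succ_succ (j + i + 1) (2 * i + 2)
  linarith [p1, p2, p3, p4, p5]

lemma theta_rec' (j i : ℕ) :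
    thetaCoeff (j + 2) i + thetaCoeff j i
      = (if 1 ≤ i then thetaCoeff (j + 1) (i - 1) else 0) + 2 * thetaCoeff (j + 1) i := by
  rcases i with _ | i
  · simp [theta_c0]; ring
  · have := theta_rec j i
    simpa using this

/-- coefficient (in the power basis of `ℤ[μ]`) of the reduced `F_j = θ_j`, `θ_n ↦ 0`,
`θ_{2n-j} ↦ -θ_j`. -/
def Fc (n j i : ℕ) : ℤ :=
  if j < n then thetaCoeff j i else if j = n then 0 else -thetaCoeff (2 * n - j) i

/-- coefficient of the reduced `G_j = θ_j - θ_{j+1}` (with `θ_n ↦ 0` and palindromic extension). -/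
def Gc (n j i : ℕ) : ℤ :=
  if j + 2 ≤ n then thetaCoeff j i - thetaCoeff (j + 1) i
  else if j ≤ n then thetaCoeff (n - 1) i
  else thetaCoeff (2 * n - 1 - j) i - thetaCoeff (2 * n - j) i

section entry
variable {n : ℕ}

lemma Fc_lt {j : ℕ} (h : j < n) (i : ℕ) : Fc n j i = thetaCoeff j i := by simp [Fc, h]
lemma Fc_eq (i : ℕ) : Fc n n i = 0 := by simp [Fc]
lemma Fc_gt {j : ℕ} (h : n < j) (i : ℕ) : Fc n j i = -thetaCoeff (2 * n - j) i := by
  simp [Fc]; omega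
lemma Gc_1 {j : ℕ} (h : j + 2 ≤ n) (i : ℕ) :
    Gc n j i = thetaCoeff j i - thetaCoeff (j + 1) i := by simp [Gc, h]
lemma Gc_2 {j : ℕ} (h1 : n ≤ j + 1) (h2 : j ≤ n) (i : ℕ) :
    Gc n j i = thetaCoeff (n - 1) i := by
  have : ¬ (j + 2 ≤ n) := by omega
  simp [Gc, this, h2]
lemma Gc_3 {j : ℕ} (h : n < j) (i : ℕ) :
    Gc n j i = thetaCoeff (2 * n - 1 - j) i - thetaCoeff (2 * n - j) i := by
  have h1 : ¬ (j + 2 ≤ n) := by omega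
  have h2 : ¬ (j ≤ n) := by omega
  simp [Gc, h1, h2]

/-- value of the top coefficient of `θ_j` for `j < n`. -/
lemma Fc_top {j : ℕ} (h : j < n) : Fc n j (n - 1) = if j = n - 1 then 1 else 0 := by
  rw [Fc_lt h]
  split_ifs with h1
  · rw [h1, theta_diag]
  · rw [theta_high (by omega)]

-- E1 block identities
lemma pa {j : ℕ} (h : j < n) (i : ℕ) :
    Fc n (n + (n - 1 - j)) i = -Fc n j i + Gc n j i := by
  rcases Nat.lt_or_ge (j + 2) (n + 1) with h2 | h2
  · rw [Fc_gt (j := n + (n - 1 - j)) (by omega), Fc_lt h, Gc_1 (by omega)]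
    simp only [show 2 * n - (n + (n - 1 - j)) = j + 1 by omega]
    ring
  · have hj : j = n - 1 := by omega
    rw [show n + (n - 1 - j) = n by omega, Fc_eq, Fc_lt h, Gc_2 (by omega) (by omega), hj]
    ring

lemma pb {j : ℕ} (h : j < n) (i : ℕ) :
    Fc n (n - 1 - j) i = -Fc n (n + j) i + Gc n (n + j) i := by
  rcases Nat.eq_zero_or_pos j with h1 | h1
  · subst h1
    rw [show n + 0 = n by omega, Fc_eq, Gc_2 (j := n) (by omega) (by omega),
      Fc_lt (show n - 1 - 0 < n by omega)]
    simp only [show n - 1 - 0 = n - 1 by omega]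
    ring
  · rw [Fc_gt (j := n + j) (by omega), Gc_3 (j := n + j) (by omega),
      Fc_lt (show n - 1 - j < n by omega)]
    simp only [show 2 * n - (n + j) = n - j by omega,
      show 2 * n - 1 - (n + j) = n - 1 - j by omega]
    ring

lemma pc {j : ℕ} (h : j < n) (i : ℕ) :
    Gc n (n + (n - 1 - j)) i = Gc n j i := by
  rcases Nat.lt_or_ge (j + 2) (n + 1) with h2 | h2
  · rw [Gc_3 (j := n + (n - 1 - j)) (by omega), Gc_1 (by omega)]
    simp only [show 2 * n - 1 - (n + (n - 1 - j)) = j by omega,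
      show 2 * n - (n + (n - 1 - j)) = j + 1 by omega]
  · rw [show n + (n - 1 - j) = n by omega, Gc_2 (j := n) (by omega) (by omega),
      Gc_2 (j := j) (by omega) (by omega)]

lemma pd {j : ℕ} (h : j < n) (i : ℕ) :
    Gc n (n - 1 - j) i = Gc n (n + j) i := by
  rcases Nat.eq_zero_or_pos j with h1 | h1
  · subst h1
    rw [show n + 0 = n by omega, Gc_2 (j := n) (by omega) (by omega),
      Gc_2 (j := n - 1 - 0) (by omega) (by omega)]
  · rw [Gc_3 (j := n + j) (by omega), Gc_1 (j := n - 1 - j) (by omega)]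
    simp only [show 2 * n - 1 - (n + j) = n - 1 - j by omega,
      show 2 * n - (n + j) = n - j by omega, show n - 1 - j + 1 = n - j by omega]

-- E2 block identities
lemma qe {j : ℕ} (h1 : 1 ≤ j) (h : j < n) (i : ℕ) :
    Fc n (n + (n - j)) i = -Fc n j i := by
  rw [Fc_gt (j := n + (n - j)) (by omega), Fc_lt h]
  simp only [show 2 * n - (n + (n - j)) = j by omega]

lemma qf {j : ℕ} (h1 : 1 ≤ j) (h : j < n) (i : ℕ) :
    Fc n (n - j) i = -Fc n (n + j) i := by
  rw [Fc_gt (j := n + j) (by omega), Fc_lt (show n - j < n by omega)]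
  simp only [show 2 * n - (n + j) = n - j by omega]
  ring

lemma qg {j i : ℕ} (h1 : 1 ≤ j) (h : j < n) (hi : i < n) :
    Gc n (n + (n - j)) i
      = (if 1 ≤ i then Fc n j (i - 1) else 0) - thetaCoeff n i * Fc n j (n - 1)
        + Gc n j i := by
  obtain ⟨m, rfl⟩ : ∃ m, j = m + 1 := ⟨j - 1, by omega⟩
  rw [Gc_3 (j := n + (n - (m + 1))) (by omega), Fc_top h, Fc_lt h]
  simp only [show 2 * n - 1 - (n + (n - (m + 1))) = m by omega,
    show 2 * n - (n + (n - (m + 1))) = m + 1 by omega]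
  have key := theta_rec' m i
  by_cases hii : 1 ≤ i
  · simp only [if_pos hii] at key ⊢
    rcases Nat.lt_or_ge (m + 3) (n + 1) with h2 | h2
    · rw [Gc_1 (by omega), if_neg (show ¬ (m + 1 = n - 1) by omega)]
      have key2 := theta_rec' (m + 1) i
      simp only [if_pos hii] at key2
      linarith [key2]
    · have hm : m + 1 = n - 1 := by omega
      rw [Gc_2 (j := m + 1) (by omega) (by omega), if_pos hm, ← hm]
      have key2 := theta_rec' (m + 1) i
      simp only [if_pos hii] at key2
      have hn2 : n = m + 1 + 1 := by omega
      rw [hn2]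
      linarith [key2]
  · simp only [if_neg hii] at key ⊢
    rcases Nat.lt_or_ge (m + 3) (n + 1) with h2 | h2
    · rw [Gc_1 (by omega), if_neg (show ¬ (m + 1 = n - 1) by omega)]
      have key2 := theta_rec' (m + 1) i
      simp only [if_neg hii] at key2
      linarith [key2]
    · have hm : m + 1 = n - 1 := by omega
      rw [Gc_2 (j := m + 1) (by omega) (by omega), if_pos hm, ← hm]
      have key2 := theta_rec' (m + 1) i
      simp only [if_neg hii] at key2
      have hn2 : n = m + 1 + 1 := by omega
      rw [hn2]
      linarith [key2]

lemma qh {j i : ℕ} (h1 : 1 ≤ j) (h : j < n) (hi : i < n) :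
    Gc n (n - j) i
      = (if 1 ≤ i then Fc n (n + j) (i - 1) else 0) - thetaCoeff n i * Fc n (n + j) (n - 1)
        + Gc n (n + j) i := by
  have hFg : ∀ k, Fc n (n + j) k = -thetaCoeff (n - j) k := by
    intro k
    rw [Fc_gt (j := n + j) (by omega)]
    simp only [show 2 * n - (n + j) = n - j by omega]
  rw [Gc_3 (j := n + j) (show n < n + j by omega), hFg, hFg]
  simp only [show 2 * n - 1 - (n + j) = n - 1 - j by omega,
    show 2 * n - (n + j) = n - j by omega]
  rcases Nat.lt_or_ge 1 j with h2 | h2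
  · -- j ≥ 2
    obtain ⟨k, hk⟩ : ∃ k, n - j = k + 1 := ⟨n - j - 1, by omega⟩
    rw [Gc_1 (j := n - j) (by omega), hk]
    simp only [show n - 1 - j = k by omega, show k + 1 + 1 = k + 2 by omega]
    have ht : thetaCoeff (k + 1) (n - 1) = 0 := theta_high (by omega)
    rw [ht]
    have key := theta_rec' k i
    by_cases hii : 1 ≤ i
    · simp only [if_pos hii] at key ⊢
      norm_num
      linarith [key]
    · simp only [if_neg hii] at key ⊢
      norm_num
      linarith [key]
  · -- j = 1
    have hj : j = 1 := by omega
    subst hj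
    have hn2 : 2 ≤ n := by omega
    rw [Gc_2 (j := n - 1) (by omega) (by omega)]
    obtain ⟨k, rfl⟩ : ∃ k, n = k + 2 := ⟨n - 2, by omega⟩
    simp only [show k + 2 - 1 - 1 = k by omega, show k + 2 - 1 = k + 1 by omega, theta_diag]
    have key := theta_rec' k i
    by_cases hii : 1 ≤ i
    · simp only [if_pos hii] at key ⊢
      norm_num
      linarith [key]
    · simp only [if_neg hii] at key ⊢
      norm_num
      linarith [key]

lemma q0g {i : ℕ} (hi : i < n) :
    -(2 * (if i = 0 then (1 : ℤ) else 0))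
      = (if 1 ≤ i then Fc n 0 (i - 1) else 0) - thetaCoeff n i * Fc n 0 (n - 1)
        + Gc n 0 i := by
  have hF : ∀ k, Fc n 0 k = if k = 0 then 1 else 0 := fun k => by
    rw [Fc_lt (by omega), theta_zero]
  rcases Nat.lt_or_ge 1 n with h2 | h2
  · -- n ≥ 2
    rw [Gc_1 (by omega), hF, hF, theta_zero]
    have h1v : thetaCoeff 1 0 = 3 := by rw [theta_c0]; ring
    have h11 : thetaCoeff 1 1 = 1 := theta_diag 1
    rcases i with _ | _ | i
    · simp [if_neg (by omega : ¬ (n - 1 = 0)), h1v]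
    · simp [h11, if_neg (by omega : ¬ (n - 1 = 0))]
    · rw [theta_high (by omega : (1:ℕ) < i + 2)]
      simp [if_neg (by omega : ¬ (i + 2 - 1 = 0)), if_neg (by omega : ¬ (n - 1 = 0))]
  · -- n = 1, i = 0
    have hn1 : n = 1 := by omega
    have hi0 : i = 0 := by omega
    subst hn1; subst hi0
    rw [Gc_2 (j := 0) (by omega) (by omega), hF]
    simp [theta_c0, theta_zero]

end entry

section sums
variable {n : ℕ}

lemma Fadd {a : ℕ} (h1 : 1 ≤ a) (h2 : a ≤ 2 * n - 1) (hn : 1 ≤ n) (i : ℕ) :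
    Fc n a i + Fc n (2 * n - a) i = 0 := by
  rcases Nat.lt_trichotomy a n with h | h | h
  · rw [Fc_lt h, Fc_gt (j := 2 * n - a) (by omega)]
    simp only [show 2 * n - (2 * n - a) = a by omega]
    ring
  · rw [h, show 2 * n - n = n by omega, Fc_eq]
    ring
  · rw [Fc_gt (j := a) (by omega), Fc_lt (show 2 * n - a < n by omega)]
    ring

lemma sumF (hn : 1 ≤ n) (i : ℕ) :
    ∑ j ∈ Finset.range (2 * n), Fc n j i = Fc n 0 i := by
  rw [show 2 * n = n + n by ring, Finset.sum_range_add]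
  have h2 : ∑ j ∈ Finset.range n, Fc n (n + j) i
      = ∑ j ∈ Finset.range n, -Fc n (n - j) i := by
    refine Finset.sum_congr rfl fun j hj => ?_
    have hj' : j < n := Finset.mem_range.mp hj
    rcases Nat.eq_zero_or_pos j with h1 | h1
    · subst h1
      rw [show n + 0 = n by omega, show n - 0 = n by omega, Fc_eq]
      ring
    · have := Fadd (a := n + j) (by omega) (by omega) hn i
      have e : 2 * n - (n + j) = n - j := by omega
      rw [e] at this
      linarith [this]
  have h3 : ∑ j ∈ Finset.range n, Fc n (n - j) i
      = ∑ j ∈ Finset.range n, Fc n (j + 1) i := by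
    rw [← Finset.sum_range_reflect]
    refine Finset.sum_congr rfl fun j hj => ?_
    have hj' : j < n := Finset.mem_range.mp hj
    congr 1
    omega
  rw [h2, Finset.sum_neg_distrib, h3]
  have tele : ∑ j ∈ Finset.range n, (Fc n j i - Fc n (j + 1) i) = Fc n 0 i - Fc n n i :=
    Finset.sum_range_sub' (fun j => Fc n j i) n
  rw [Finset.sum_sub_distrib, Fc_eq] at tele
  linarith [tele]

lemma sumG (hn : 1 ≤ n) (i : ℕ) :
    ∑ j ∈ Finset.range (2 * n), Gc n j i = 2 * (if i = 0 then 1 else 0) := by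
  rw [show 2 * n = n + n by ring, Finset.sum_range_add]
  have h2 : ∑ j ∈ Finset.range n, Gc n (n + j) i = ∑ j ∈ Finset.range n, Gc n j i := by
    rw [← Finset.sum_range_reflect (fun j => Gc n (n + j) i) n]
    refine Finset.sum_congr rfl fun j hj => ?_
    have hj' : j < n := Finset.mem_range.mp hj
    exact pc hj' i
  rw [h2, ← two_mul]
  have h3 : ∑ j ∈ Finset.range n, Gc n j i = if i = 0 then 1 else 0 := by
    obtain ⟨m, rfl⟩ : ∃ m, n = m + 1 := ⟨n - 1, by omega⟩
    rw [Finset.sum_range_succ]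
    have h4 : ∑ j ∈ Finset.range m, Gc (m + 1) j i
        = ∑ j ∈ Finset.range m, (thetaCoeff j i - thetaCoeff (j + 1) i) := by
      refine Finset.sum_congr rfl fun j hj => ?_
      exact Gc_1 (by have := Finset.mem_range.mp hj; omega) i
    rw [h4, Finset.sum_range_sub' (fun j => thetaCoeff j i) m,
      Gc_2 (j := m) (by omega) (by omega)]
    simp only [show m + 1 - 1 = m by omega, theta_zero]
    ring
  rw [h3]

lemma sumFW (hn : 1 ≤ n) {m : ℕ} (hm : m < n) (i : ℕ) :
    ∑ j ∈ Finset.range (2 * n),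
      (if m + 1 ≤ j ∧ j ≤ 2 * n - 1 - m ∧ (j + m) % 2 = 1 then Fc n j i else 0) = 0 := by
  refine Finset.sum_involution (fun a _ => if a = 0 then 0 else 2 * n - a) ?_ ?_ ?_ ?_
  · intro a ha
    by_cases h0 : a = 0
    · subst h0
      simp only [if_pos rfl]
      split_ifs <;> first | (exfalso; omega) | ring1
    · simp only [if_neg h0]
      split_ifs with h1 h2 <;>
        first
          | (exfalso; omega)
          | (exact Fadd (by omega) (by omega) hn i)
          | ring1
  · intro a ha hfa
    by_cases h0 : a = 0
    · exfalso
      apply hfa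
      subst h0
      rw [if_neg (by omega : ¬ (m + 1 ≤ 0 ∧ 0 ≤ 2 * n - 1 - m ∧ (0 + m) % 2 = 1))]
    · simp only [if_neg h0]
      intro hga
      apply hfa
      have han : a = n := by omega
      subst han
      split_ifs with h1
      · exact Fc_eq i
      · rfl
  · intro a ha
    have ha' : a < 2 * n := Finset.mem_range.mp ha
    by_cases h0 : a = 0
    · simp only [if_pos h0, Finset.mem_range]
      omega
    · simp only [if_neg h0, Finset.mem_range]
      omega
  · intro a ha
    have ha' : a < 2 * n := Finset.mem_range.mp ha
    by_cases h0 : a = 0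
    · simp [h0]
    · simp only [if_neg h0]
      rw [if_neg (by omega : ¬ (2 * n - a = 0))]
      omega

lemma sumGW (hn : 1 ≤ n) : ∀ d, d < n → ∀ i,
    ∑ j ∈ Finset.range (2 * n),
      (if (n - 1 - d) + 1 ≤ j ∧ j ≤ 2 * n - 1 - (n - 1 - d) ∧ (j + (n - 1 - d)) % 2 = 1
        then Gc n j i else 0) = thetaCoeff (n - 1 - d) i := by
  intro d
  induction d using Nat.strong_induction_on with
  | _ d ih =>
    intro hd i
    match d, hd with
    | 0, hd =>
      have hpt : ∀ j ∈ Finset.range (2 * n),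
          (if (n - 1 - 0) + 1 ≤ j ∧ j ≤ 2 * n - 1 - (n - 1 - 0) ∧ (j + (n - 1 - 0)) % 2 = 1
            then Gc n j i else 0) = (if j = n then Gc n j i else 0) := by
        intro j hj
        split_ifs with h1 h2 h2 <;> first | (exfalso; omega) | rfl
      rw [Finset.sum_congr rfl hpt, Finset.sum_ite_eq' (Finset.range (2 * n)) n
        (fun j => Gc n j i), if_pos (Finset.mem_range.mpr (by omega)),
        Gc_2 (j := n) (by omega) (by omega)]
      simp only [show n - 1 - 0 = n - 1 by omega]
    | 1, hd =>
      have hn2 : 2 ≤ n := by omega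
      have hpt : ∀ j ∈ Finset.range (2 * n),
          (if (n - 1 - 1) + 1 ≤ j ∧ j ≤ 2 * n - 1 - (n - 1 - 1) ∧ (j + (n - 1 - 1)) % 2 = 1
            then Gc n j i else 0)
          = (if j = n - 1 then Gc n j i else 0) + (if j = n + 1 then Gc n j i else 0) := by
        intro j hj
        split_ifs <;> first | (exfalso; omega) | ring1
      rw [Finset.sum_congr rfl hpt, Finset.sum_add_distrib,
        Finset.sum_ite_eq' (Finset.range (2 * n)) (n - 1) (fun j => Gc n j i),
        Finset.sum_ite_eq' (Finset.range (2 * n)) (n + 1) (fun j => Gc n j i),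
        if_pos (Finset.mem_range.mpr (by omega)), if_pos (Finset.mem_range.mpr (by omega)),
        Gc_2 (j := n - 1) (by omega) (by omega), Gc_3 (j := n + 1) (by omega)]
      simp only [show 2 * n - 1 - (n + 1) = n - 2 by omega, show 2 * n - (n + 1) = n - 1 by omega,
        show n - 1 - 1 = n - 2 by omega]
      ring
    | (d + 2), hd =>
      have hpt : ∀ j ∈ Finset.range (2 * n),
          (if (n - 1 - (d + 2)) + 1 ≤ j ∧ j ≤ 2 * n - 1 - (n - 1 - (d + 2))
              ∧ (j + (n - 1 - (d + 2))) % 2 = 1 then Gc n j i else 0)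
          = (if (n - 1 - d) + 1 ≤ j ∧ j ≤ 2 * n - 1 - (n - 1 - d) ∧ (j + (n - 1 - d)) % 2 = 1
              then Gc n j i else 0)
            + ((if j = (n - 1 - (d + 2)) + 1 then Gc n j i else 0)
              + (if j = 2 * n - 1 - (n - 1 - (d + 2)) then Gc n j i else 0)) := by
        intro j hj
        split_ifs <;> first | (exfalso; omega) | ring1
      rw [Finset.sum_congr rfl hpt, Finset.sum_add_distrib, Finset.sum_add_distrib,
        Finset.sum_ite_eq' (Finset.range (2 * n)) ((n - 1 - (d + 2)) + 1) (fun j => Gc n j i),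
        Finset.sum_ite_eq' (Finset.range (2 * n)) (2 * n - 1 - (n - 1 - (d + 2)))
          (fun j => Gc n j i),
        if_pos (Finset.mem_range.mpr (by omega)), if_pos (Finset.mem_range.mpr (by omega)),
        ih d (by omega) (by omega) i,
        Gc_1 (j := (n - 1 - (d + 2)) + 1) (by omega),
        Gc_3 (j := 2 * n - 1 - (n - 1 - (d + 2))) (by omega)]
      simp only [show 2 * n - 1 - (2 * n - 1 - (n - 1 - (d + 2))) = n - 1 - (d + 2) by omega,
        show 2 * n - (2 * n - 1 - (n - 1 - (d + 2))) = (n - 1 - (d + 2)) + 1 by omega,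
        show n - 1 - (d + 2) + 1 + 1 = n - 1 - d by omega]
      ring

end sums

section matrixpart
variable (n : ℕ)

def MA : Matrix (Fin n) (Fin n) ℤ := Matrix.of fun i j => Fc n j i
def MB : Matrix (Fin n) (Fin n) ℤ := Matrix.of fun i j => Fc n (n + j) i
def MC : Matrix (Fin n) (Fin n) ℤ := Matrix.of fun i j => Gc n j i
def MD : Matrix (Fin n) (Fin n) ℤ := Matrix.of fun i j => Gc n (n + j) i
def UB : Matrix (Fin n ⊕ Fin n) (Fin n ⊕ Fin n) ℤ := fromBlocks (MA n) (MB n) (MC n) (MD n)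
def Umat : Matrix (Fin (2 * n)) (Fin (2 * n)) ℤ := reindex (sumEquiv n) (sumEquiv n) (UB n)
def Jb : Matrix (Fin n) (Fin n) ℤ :=
  Matrix.of fun i j => if (i : ℕ) + (j : ℕ) = n - 1 then 1 else 0
def Aq : Matrix (Fin n) (Fin n) ℤ := Matrix.of fun i j => if (j : ℕ) = 0 then -1 else 0
def Bq : Matrix (Fin n) (Fin n) ℤ := Matrix.of fun i j => if (i : ℕ) + (j : ℕ) = n then 1 else 0
def Dq : Matrix (Fin n) (Fin n) ℤ :=
  Matrix.of fun i j => if (i : ℕ) = 0 ∧ (j : ℕ) = 0 then 1 else 0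
def PB : Matrix (Fin n ⊕ Fin n) (Fin n ⊕ Fin n) ℤ := fromBlocks 0 (Jb n) (Jb n) 0
def QB : Matrix (Fin n ⊕ Fin n) (Fin n ⊕ Fin n) ℤ :=
  fromBlocks (Aq n) (Bq n) (Aq n + Bq n) (Dq n)

lemma e_inl (i : Fin n) : ((sumEquiv n) (Sum.inl i) : ℕ) = (i : ℕ) := by
  simp [_root_.sumEquiv]
lemma e_inr (i : Fin n) : ((sumEquiv n) (Sum.inr i) : ℕ) = n + (i : ℕ) := by
  simp [_root_.sumEquiv]
  omega

lemma reindex_mul (X Y : Matrix (Fin n ⊕ Fin n) (Fin n ⊕ Fin n) ℤ) :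
    (reindex (sumEquiv n) (sumEquiv n) X) * (reindex (sumEquiv n) (sumEquiv n) Y)
      = reindex (sumEquiv n) (sumEquiv n) (X * Y) := by
  simp [reindex_apply, Matrix.submatrix_mul_equiv]

lemma eq_reindex (Z : Matrix (Fin (2 * n)) (Fin (2 * n)) ℤ)
    (X : Matrix (Fin n ⊕ Fin n) (Fin n ⊕ Fin n) ℤ)
    (h : ∀ a b, Z ((sumEquiv n) a) ((sumEquiv n) b) = X a b) :
    Z = reindex (sumEquiv n) (sumEquiv n) X := by
  ext r j
  rw [reindex_apply, submatrix_apply]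
  have hr := Equiv.apply_symm_apply (sumEquiv n) r
  have hj := Equiv.apply_symm_apply (sumEquiv n) j
  calc Z r j = Z ((sumEquiv n) ((sumEquiv n).symm r)) ((sumEquiv n) ((sumEquiv n).symm j)) := by
        rw [hr, hj]
    _ = X ((sumEquiv n).symm r) ((sumEquiv n).symm j) := h _ _

lemma Pmat_eq : Pmat n = reindex (sumEquiv n) (sumEquiv n) (PB n) := by
  apply eq_reindex
  rintro (a | a) (b | b) <;>
    simp only [Pmat, PB, Matrix.of_apply, fromBlocks_apply₁₁, fromBlocks_apply₁₂,
      fromBlocks_apply₂₁, fromBlocks_apply₂₂, e_inl, e_inr, Jb, Matrix.zero_apply] <;>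
    have ha := a.isLt <;> have hb := b.isLt <;>
    split_ifs <;> first | (exfalso; omega) | rfl

lemma Qmat_eq (hn : 1 ≤ n) : Qmat n = reindex (sumEquiv n) (sumEquiv n) (QB n) := by
  apply eq_reindex
  rintro (a | a) (b | b) <;>
    simp only [Qmat, QB, Matrix.of_apply, fromBlocks_apply₁₁, fromBlocks_apply₁₂,
      fromBlocks_apply₂₁, fromBlocks_apply₂₂, e_inl, e_inr, Aq, Bq, Dq, Matrix.add_apply] <;>
    have ha := a.isLt <;> have hb := b.isLt <;>
    split_ifs <;> first | (exfalso; omega) | rfl | ring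

lemma mulJ (hn : 1 ≤ n) (M : Matrix (Fin n) (Fin n) ℤ) (i j : Fin n) :
    (M * Jb n) i j = M i ⟨n - 1 - (j : ℕ), by omega⟩ := by
  rw [mul_apply]
  rw [Finset.sum_eq_single (⟨n - 1 - (j : ℕ), by omega⟩ : Fin n)]
  · rw [Jb, Matrix.of_apply, if_pos (by simp; omega)]
    ring
  · intro b _ hb
    rw [Jb, Matrix.of_apply, if_neg, mul_zero]
    intro hc
    apply hb
    apply Fin.ext
    simp only []
    have := j.isLt
    omega
  · intro h
    exact absurd (Finset.mem_univ _) h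

lemma mulAq (M : Matrix (Fin n) (Fin n) ℤ) (i j : Fin n) :
    (M * Aq n) i j = if (j : ℕ) = 0 then -(∑ k, M i k) else 0 := by
  rw [mul_apply]
  split_ifs with hj
  · rw [← Finset.sum_neg_distrib]
    refine Finset.sum_congr rfl fun k _ => ?_
    rw [Aq, Matrix.of_apply, if_pos hj]
    ring
  · rw [Finset.sum_eq_zero]
    intro k _
    rw [Aq, Matrix.of_apply, if_neg hj, mul_zero]

lemma mulBq0 (M : Matrix (Fin n) (Fin n) ℤ) (i j : Fin n) (hj : (j : ℕ) = 0) :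
    (M * Bq n) i j = 0 := by
  rw [mul_apply, Finset.sum_eq_zero]
  intro k _
  rw [Bq, Matrix.of_apply, if_neg, mul_zero]
  have := k.isLt
  omega

lemma mulBq1 (M : Matrix (Fin n) (Fin n) ℤ) (i j : Fin n) (hj : 1 ≤ (j : ℕ)) :
    (M * Bq n) i j = M i ⟨n - (j : ℕ), by have := j.isLt; omega⟩ := by
  rw [mul_apply]
  rw [Finset.sum_eq_single (⟨n - (j : ℕ), by have := j.isLt; omega⟩ : Fin n)]
  · rw [Bq, Matrix.of_apply,
      if_pos (show ((⟨n - (j : ℕ), by have := j.isLt; omega⟩ : Fin n) : ℕ) + (j : ℕ) = n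
        by have := j.isLt; simp; try omega)]
    ring
  · intro b _ hb
    rw [Bq, Matrix.of_apply, if_neg, mul_zero]
    intro hc
    apply hb
    apply Fin.ext
    simp only []
    have := j.isLt
    have := b.isLt
    omega
  · intro h
    exact absurd (Finset.mem_univ _) h

lemma mulDq (hn : 1 ≤ n) (M : Matrix (Fin n) (Fin n) ℤ) (i j : Fin n) :
    (M * Dq n) i j = if (j : ℕ) = 0 then M i ⟨0, by omega⟩ else 0 := by
  rw [mul_apply]
  split_ifs with hj
  · rw [Finset.sum_eq_single (⟨0, by omega⟩ : Fin n)]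
    · rw [Dq, Matrix.of_apply, if_pos (by constructor <;> simp [hj])]
      ring
    · intro b _ hb
      rw [Dq, Matrix.of_apply, if_neg, mul_zero]
      rintro ⟨hb0, -⟩
      apply hb
      apply Fin.ext
      simp only [hb0]
    · intro h
      exact absurd (Finset.mem_univ _) h
  · rw [Finset.sum_eq_zero]
    intro k _
    rw [Dq, Matrix.of_apply, if_neg, mul_zero]
    rintro ⟨-, hc⟩
    exact hj hc

lemma mulCn (hn : 1 ≤ n) (M : Matrix (Fin n) (Fin n) ℤ) (i j : Fin n) :
    (companionTheta n * M) i j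
      = (if 1 ≤ (i : ℕ) then M ⟨(i : ℕ) - 1, by omega⟩ j else 0)
        - thetaCoeff n i * M ⟨n - 1, by omega⟩ j := by
  rw [mul_apply]
  have hsplit : ∀ k : Fin n, companionTheta n i k * M k j
      = (if k = (⟨n - 1, by omega⟩ : Fin n) then -(thetaCoeff n (i : ℕ)) * M k j else 0)
        + (if k = (⟨(i : ℕ) - 1, by omega⟩ : Fin n) ∧ 1 ≤ (i : ℕ) then M k j else 0) := by
    intro k
    rw [companionTheta, Matrix.of_apply]
    have hk := k.isLt
    have hi := i.isLt
    by_cases h1 : (k : ℕ) = n - 1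
    · have hk1 : k = (⟨n - 1, by omega⟩ : Fin n) := Fin.ext h1
      have hk5 : ¬ (k = (⟨(i : ℕ) - 1, by omega⟩ : Fin n) ∧ 1 ≤ (i : ℕ)) := by
        rintro ⟨hc, hi1⟩
        have : (k : ℕ) = (i : ℕ) - 1 := by rw [hc]
        omega
      rw [if_pos h1, if_pos hk1, if_neg hk5, add_zero]
    · have hk2 : ¬ (k = (⟨n - 1, by omega⟩ : Fin n)) := fun hc => h1 (by rw [hc])
      rw [if_neg h1, if_neg hk2]
      by_cases h2 : (i : ℕ) = (k : ℕ) + 1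
      · have hk3 : k = (⟨(i : ℕ) - 1, by omega⟩ : Fin n) := Fin.ext (show (k : ℕ) = (i : ℕ) - 1 by omega)
        rw [if_pos h2, if_pos ⟨hk3, by omega⟩]
        ring
      · have hk4 : ¬ (k = (⟨(i : ℕ) - 1, by omega⟩ : Fin n) ∧ 1 ≤ (i : ℕ)) := by
          rintro ⟨hc, hi1⟩
          have : (k : ℕ) = (i : ℕ) - 1 := by rw [hc]
          omega
        rw [if_neg h2, if_neg hk4]
        ring
  rw [Finset.sum_congr rfl (fun k _ => hsplit k), Finset.sum_add_distrib]
  have s1 : ∑ k : Fin n, (if k = (⟨n - 1, by omega⟩ : Fin n)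
      then -(thetaCoeff n (i : ℕ)) * M k j else 0)
      = -(thetaCoeff n (i : ℕ)) * M ⟨n - 1, by omega⟩ j := by
    rw [Finset.sum_ite_eq' Finset.univ (⟨n - 1, by omega⟩ : Fin n)
      (fun k => -(thetaCoeff n (i : ℕ)) * M k j), if_pos (Finset.mem_univ _)]
  have s2 : ∑ k : Fin n, (if k = (⟨(i : ℕ) - 1, by omega⟩ : Fin n) ∧ 1 ≤ (i : ℕ)
      then M k j else 0)
      = if 1 ≤ (i : ℕ) then M ⟨(i : ℕ) - 1, by omega⟩ j else 0 := by
    by_cases hi : 1 ≤ (i : ℕ)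
    · rw [if_pos hi]
      have : ∀ k : Fin n, (if k = (⟨(i : ℕ) - 1, by omega⟩ : Fin n) ∧ 1 ≤ (i : ℕ)
          then M k j else 0) = (if k = (⟨(i : ℕ) - 1, by omega⟩ : Fin n) then M k j else 0) := by
        intro k
        by_cases hk : k = (⟨(i : ℕ) - 1, by omega⟩ : Fin n)
        · rw [if_pos ⟨hk, hi⟩, if_pos hk]
        · rw [if_neg (fun hc => hk hc.1), if_neg hk]
      rw [Finset.sum_congr rfl (fun k _ => this k),
        Finset.sum_ite_eq' Finset.univ _ (fun k => M k j), if_pos (Finset.mem_univ _)]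
    · rw [if_neg hi, Finset.sum_eq_zero]
      intro k _
      rw [if_neg (fun hc => hi hc.2)]
  rw [s1, s2]
  ring

-- E1 : UB * PB = X'B * UB
lemma E1 (hn : 1 ≤ n) :
    UB n * PB n = fromBlocks (-1) 1 0 1 * UB n := by
  rw [UB, PB, Matrix.fromBlocks_multiply, Matrix.fromBlocks_multiply]
  have hMAJ : MA n * Jb n = -(MB n) + MD n := by
    ext i j
    rw [mulJ n hn, Matrix.add_apply, Matrix.neg_apply, MA, MB, MD,
      Matrix.of_apply, Matrix.of_apply, Matrix.of_apply]
    exact pb j.isLt i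
  have hMBJ : MB n * Jb n = -(MA n) + MC n := by
    ext i j
    rw [mulJ n hn, Matrix.add_apply, Matrix.neg_apply, MA, MB, MC,
      Matrix.of_apply, Matrix.of_apply, Matrix.of_apply]
    exact pa j.isLt i
  have hMCJ : MC n * Jb n = MD n := by
    ext i j
    rw [mulJ n hn, MC, MD, Matrix.of_apply, Matrix.of_apply]
    exact pd j.isLt i
  have hMDJ : MD n * Jb n = MC n := by
    ext i j
    rw [mulJ n hn, MC, MD, Matrix.of_apply, Matrix.of_apply]
    exact pc j.isLt i
  simp only [mul_zero, zero_mul, add_zero, zero_add, one_mul, neg_one_mul]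
  rw [hMAJ, hMBJ, hMCJ, hMDJ]

lemma E2 (hn : 1 ≤ n) :
    UB n * QB n = fromBlocks (-1) 0 (companionTheta n) 1 * UB n := by
  have h1 : MA n * Aq n + MB n * (Aq n + Bq n) = -(MA n) := by
    rw [mul_add]
    ext i j
    simp only [Matrix.add_apply, Matrix.neg_apply]
    by_cases hj : (j : ℕ) = 0
    · rw [mulAq n (MA n) i j, mulAq n (MB n) i j, if_pos hj, if_pos hj, mulBq0 n (MB n) i j hj,
        add_zero]
      simp only [MA, MB, Matrix.of_apply, hj]
      have c1 := Fin.sum_univ_eq_sum_range (fun k => Fc n k (i : ℕ)) n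
      have c2 := Fin.sum_univ_eq_sum_range (fun k => Fc n (n + k) (i : ℕ)) n
      have hsum := sumF (n := n) hn (i : ℕ)
      rw [show 2 * n = n + n by ring, Finset.sum_range_add] at hsum
      linarith [c1, c2, hsum]
    · rw [mulAq n (MA n) i j, mulAq n (MB n) i j, if_neg hj, if_neg hj,
        mulBq1 n (MB n) i j (by omega), zero_add, zero_add]
      simp only [MA, MB, Matrix.of_apply]
      have := qe (n := n) (j := (j : ℕ)) (by omega) j.isLt (i : ℕ)
      rw [this]
  have h2 : MA n * Bq n + MB n * Dq n = -(MB n) := by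
    ext i j
    simp only [Matrix.add_apply, Matrix.neg_apply]
    by_cases hj : (j : ℕ) = 0
    · rw [mulBq0 n (MA n) i j hj, mulDq n hn (MB n) i j, if_pos hj, zero_add]
      simp only [MB, Matrix.of_apply, hj]
      rw [show n + 0 = n by ring]
      simp only [Fc_eq, neg_zero]
    · rw [mulBq1 n (MA n) i j (by omega), mulDq n hn (MB n) i j, if_neg hj, add_zero]
      simp only [MA, MB, Matrix.of_apply]
      exact qf (by omega) j.isLt (i : ℕ)
  have h3 : MC n * Aq n + MD n * (Aq n + Bq n) = companionTheta n * MA n + MC n := by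
    rw [mul_add]
    ext i j
    simp only [Matrix.add_apply]
    rw [mulCn n hn (MA n) i j]
    by_cases hj : (j : ℕ) = 0
    · rw [mulAq n (MC n) i j, mulAq n (MD n) i j, if_pos hj, if_pos hj,
        mulBq0 n (MD n) i j hj, add_zero]
      simp only [MA, MC, MD, Matrix.of_apply, hj]
      have c1 := Fin.sum_univ_eq_sum_range (fun k => Gc n k (i : ℕ)) n
      have c2 := Fin.sum_univ_eq_sum_range (fun k => Gc n (n + k) (i : ℕ)) n
      have hsum := sumG (n := n) hn (i : ℕ)
      rw [show 2 * n = n + n by ring, Finset.sum_range_add] at hsum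
      have key := q0g (n := n) (i := (i : ℕ)) i.isLt
      linarith [c1, c2, hsum, key]
    · rw [mulAq n (MC n) i j, mulAq n (MD n) i j, if_neg hj, if_neg hj,
        mulBq1 n (MD n) i j (by omega), zero_add, zero_add]
      simp only [MA, MC, MD, Matrix.of_apply]
      exact qg (by omega) j.isLt i.isLt
  have h4 : MC n * Bq n + MD n * Dq n = companionTheta n * MB n + MD n := by
    ext i j
    simp only [Matrix.add_apply]
    rw [mulCn n hn (MB n) i j]
    by_cases hj : (j : ℕ) = 0
    · rw [mulBq0 n (MC n) i j hj, mulDq n hn (MD n) i j, if_pos hj, zero_add]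
      simp only [MB, MD, Matrix.of_apply, hj]
      rw [show n + 0 = n by ring]
      simp only [Fc_eq, ite_self, mul_zero, neg_zero, zero_add, sub_zero]
      try ring
    · rw [mulBq1 n (MC n) i j (by omega), mulDq n hn (MD n) i j, if_neg hj, add_zero]
      simp only [MB, MC, MD, Matrix.of_apply]
      exact qh (by omega) j.isLt i.isLt
  rw [UB, QB, Matrix.fromBlocks_multiply, Matrix.fromBlocks_multiply]
  simp only [mul_zero, zero_mul, add_zero, zero_add, one_mul, neg_one_mul]
  rw [h1, h2, h3, h4]

def W12 : Matrix (Fin n) (Fin n) ℤ :=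
  Matrix.of fun j m =>
    if (m : ℕ) + 1 ≤ (j : ℕ) ∧ (j : ℕ) ≤ 2 * n - 1 - (m : ℕ) ∧ ((j : ℕ) + (m : ℕ)) % 2 = 1
    then 1 else 0
def W22 : Matrix (Fin n) (Fin n) ℤ :=
  Matrix.of fun r m =>
    if (m : ℕ) + 1 ≤ n + (r : ℕ) ∧ n + (r : ℕ) ≤ 2 * n - 1 - (m : ℕ)
        ∧ ((n + (r : ℕ)) + (m : ℕ)) % 2 = 1
    then 1 else 0
def WB : Matrix (Fin n ⊕ Fin n) (Fin n ⊕ Fin n) ℤ := fromBlocks 1 (W12 n) 0 (W22 n)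
def MMb : Matrix (Fin n ⊕ Fin n) (Fin n ⊕ Fin n) ℤ := fromBlocks (MA n) 0 (MC n) (MA n)

lemma range_two_split (f : ℕ → ℤ) :
    ∑ j ∈ Finset.range (2 * n), f j
      = ∑ j ∈ Finset.range n, f j + ∑ j ∈ Finset.range n, f (n + j) := by
  rw [show 2 * n = n + n by ring, Finset.sum_range_add]

lemma hUW (hn : 1 ≤ n) : UB n * WB n = MMb n := by
  have hTR : MA n * W12 n + MB n * W22 n = 0 := by
    ext i m
    simp only [Matrix.add_apply, Matrix.zero_apply, mul_apply, MA, MB, W12, W22,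
      Matrix.of_apply, mul_ite, mul_one, mul_zero]
    have c1 := Fin.sum_univ_eq_sum_range
      (fun k => if (m : ℕ) + 1 ≤ k ∧ k ≤ 2 * n - 1 - (m : ℕ) ∧ (k + (m : ℕ)) % 2 = 1
        then Fc n k (i : ℕ) else 0) n
    have c2 := Fin.sum_univ_eq_sum_range
      (fun k => if (m : ℕ) + 1 ≤ n + k ∧ n + k ≤ 2 * n - 1 - (m : ℕ)
          ∧ ((n + k) + (m : ℕ)) % 2 = 1 then Fc n (n + k) (i : ℕ) else 0) n
    have hsum := sumFW (n := n) hn m.isLt (i : ℕ)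
    rw [range_two_split] at hsum
    linarith [c1, c2, hsum]
  have hBR : MC n * W12 n + MD n * W22 n = MA n := by
    ext i m
    simp only [Matrix.add_apply, mul_apply, MA, MC, MD, W12, W22,
      Matrix.of_apply, mul_ite, mul_one, mul_zero]
    have c1 := Fin.sum_univ_eq_sum_range
      (fun k => if (m : ℕ) + 1 ≤ k ∧ k ≤ 2 * n - 1 - (m : ℕ) ∧ (k + (m : ℕ)) % 2 = 1
        then Gc n k (i : ℕ) else 0) n
    have c2 := Fin.sum_univ_eq_sum_range
      (fun k => if (m : ℕ) + 1 ≤ n + k ∧ n + k ≤ 2 * n - 1 - (m : ℕ)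
          ∧ ((n + k) + (m : ℕ)) % 2 = 1 then Gc n (n + k) (i : ℕ) else 0) n
    have hsum := sumGW (n := n) hn (n - 1 - (m : ℕ)) (by have := m.isLt; omega) (i : ℕ)
    simp only [show n - 1 - (n - 1 - (m : ℕ)) = (m : ℕ) by have := m.isLt; omega] at hsum
    rw [range_two_split] at hsum
    rw [Fc_lt m.isLt]
    linarith [c1, c2, hsum]
  rw [UB, WB, MMb, Matrix.fromBlocks_multiply]
  simp only [mul_one, mul_zero, add_zero]
  rw [hTR, hBR]

lemma detMA (hn : 1 ≤ n) : (MA n).det = 1 := by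
  have ht : (MA n).BlockTriangular id := by
    intro i j hij
    simp only [id] at hij
    simp only [MA, Matrix.of_apply]
    rw [Fc_lt j.isLt, theta_high hij]
  rw [Matrix.det_of_upperTriangular ht]
  rw [Finset.prod_congr rfl (fun i _ => show MA n i i = 1 by
    simp only [MA, Matrix.of_apply]
    rw [Fc_lt i.isLt, theta_diag])]
  exact Finset.prod_const_one

lemma unitU (hn : 1 ≤ n) : IsUnit (Umat n).det := by
  have h : (Umat n).det * (reindex (sumEquiv n) (sumEquiv n) (WB n)).det = 1 := by
    rw [← Matrix.det_mul, Umat, reindex_mul, hUW n hn, Matrix.det_reindex_self, MMb,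
      Matrix.det_fromBlocks_zero₁₂, detMA n hn, one_mul]
  exact IsUnit.of_mul_eq_one _ h

lemma keyP (hn : 1 ≤ n) :
    Umat n * Pmat n
      = (reindex (sumEquiv n) (sumEquiv n)) (fromBlocks (-1) 1 0 (1 : Matrix (Fin n) (Fin n) ℤ))
        * Umat n := by
  rw [Pmat_eq n]
  unfold Umat
  rw [reindex_mul, E1 n hn, ← reindex_mul]

lemma keyQ (hn : 1 ≤ n) :
    Umat n * Qmat n
      = (reindex (sumEquiv n) (sumEquiv n))
          (fromBlocks (-1) 0 (companionTheta n) (1 : Matrix (Fin n) (Fin n) ℤ))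
        * Umat n := by
  rw [Qmat_eq n hn]
  unfold Umat
  rw [reindex_mul, E2 n hn, ← reindex_mul]


theorem stmt_0 (n : ℕ) (hn : 1 ≤ n) (hp : Nat.Prime (2 * n + 1)) :
    ∃ U : Matrix (Fin (2 * n)) (Fin (2 * n)) ℤ, IsUnit U.det ∧
      U * Pmat n * U⁻¹ =
        (Matrix.reindex (sumEquiv n) (sumEquiv n))
          (Matrix.fromBlocks (-1) 1 0 (1 : Matrix (Fin n) (Fin n) ℤ)) ∧
      U * Qmat n * U⁻¹ =
        (Matrix.reindex (sumEquiv n) (sumEquiv n))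
          (Matrix.fromBlocks (-1) 0 (companionTheta n) (1 : Matrix (Fin n) (Fin n) ℤ)) := by
  refine ⟨Umat n, unitU n hn, ?_, ?_⟩
  · haveI := (Umat n).invertibleOfIsUnitDet (unitU n hn)
    rw [Matrix.mul_inv_eq_iff_eq_mul_of_invertible]
    exact keyP n hn
  · haveI := (Umat n).invertibleOfIsUnitDet (unitU n hn)
    rw [Matrix.mul_inv_eq_iff_eq_mul_of_invertible]
    exact keyQ n hn

end matrixpart
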